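/- Under the separable least-squares model assumptions with A(x) of full column rank for every x ∈ Ω and σ̃ := min_{x∈Ω} σ_min(A(x)) > 0, define the lifting map θ(x) = (x, ŷ(x)) with ŷ(x) = A(x)⁺ z. Then for every x ∈ Ω, the unmixing metric between lifted points satisfies ρ(θ(x), θ(x*)) ≤ c_vp·‖x − x*‖ + (2σ₁/σ̃)·‖w‖, where c_vp = (σ₂ + σ₁²/σ̃)·‖y*‖ + σ₁. -/

import Mathlib

/-!
STATEMENT 10: Perturbation of the lifting map `θ(x) = (x, ŷ(x))` in the unmixing metric:
`ρ(θ(x), θ(x*)) = (σ₂‖y*‖ + σ₁)‖x − x*‖ + σ₁‖ŷ(x) − ŷ(x*)‖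
   ≤ c_vp‖x − x*‖ + (2σ₁/σ̃)‖w‖`, with `c_vp = (σ₂ + σ₁²/σ̃)‖y*‖ + σ₁`.
-/

noncomputable section

abbrev EucSp (n : ℕ) : Type := EuclideanSpace ℝ (Fin n)

/-- The Moore–Penrose pseudo-inverse `A(x)⁺ = (A(x)ᵀA(x))⁻¹A(x)ᵀ` of a full-column-rank
dictionary. -/
def pinv {p d N : ℕ} (A : EucSp p → (EucSp d →L[ℝ] EucSp N)) (x : EucSp p) :
    EucSp N →L[ℝ] EucSp d :=
  (ContinuousLinearMap.adjoint (A x) ∘L A x).inverse ∘L ContinuousLinearMap.adjoint (A x)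

open ContinuousLinearMap in
/-- Core properties of the pseudo-inverse under a uniform lower singular-value bound:
it is a left inverse, and it is bounded by `1/σm`. -/
lemma pinv_core {d N : ℕ} (Aₓ : EucSp d →L[ℝ] EucSp N) (σm : ℝ) (hσ : 0 < σm)
    (hlow : ∀ v, σm * ‖v‖ ≤ ‖Aₓ v‖) :
    (∀ v, ((adjoint Aₓ ∘L Aₓ).inverse ∘L adjoint Aₓ) (Aₓ v) = v) ∧
    (∀ u, ‖((adjoint Aₓ ∘L Aₓ).inverse ∘L adjoint Aₓ) u‖ ≤ ‖u‖ / σm) := by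
  set B := adjoint Aₓ ∘L Aₓ with hB
  have hinner : ∀ v, (inner ℝ (B v) v : ℝ) = ‖Aₓ v‖ ^ 2 := by
    intro v
    rw [hB]
    simp only [ContinuousLinearMap.comp_apply, ContinuousLinearMap.adjoint_inner_left]
    rw [real_inner_self_eq_norm_sq]
  have hinj : Function.Injective B := by
    intro v v' h
    have h0 : B (v - v') = 0 := by rw [map_sub, h, sub_self]
    have h1 : ‖Aₓ (v - v')‖ ^ 2 = 0 := by rw [← hinner, h0, inner_zero_left]
    have h2 : ‖Aₓ (v - v')‖ = 0 := by nlinarith [norm_nonneg (Aₓ (v - v'))]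
    have h3 := hlow (v - v')
    have h4 : ‖v - v'‖ = 0 := by nlinarith [norm_nonneg (v - v')]
    exact sub_eq_zero.mp (norm_eq_zero.mp h4)
  have hsurj : Function.Surjective B :=
    LinearMap.injective_iff_surjective.mp (show Function.Injective B.toLinearMap from hinj)
  let e : EucSp d ≃L[ℝ] EucSp d :=
    (LinearEquiv.ofBijective (B : EucSp d →ₗ[ℝ] EucSp d)
      ⟨hinj, hsurj⟩).toContinuousLinearEquiv
  have hBe : (e : EucSp d →L[ℝ] EucSp d) = B := by ext v; rfl
  have hinvB : B.inverse = (e.symm : EucSp d →L[ℝ] EucSp d) := by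
    rw [← hBe, ContinuousLinearMap.inverse_equiv]
  constructor
  · intro v
    show B.inverse (adjoint Aₓ (Aₓ v)) = v
    have : B.inverse (adjoint Aₓ (Aₓ v)) = e.symm (e v) := by rw [hinvB]; rfl
    rw [this]; exact e.symm_apply_apply v
  · intro u
    set v := B.inverse (adjoint Aₓ u) with hv
    have hBv : B v = adjoint Aₓ u := by
      rw [hv, hinvB]; exact e.apply_symm_apply _
    have h1 : ‖Aₓ v‖ ^ 2 = inner ℝ u (Aₓ v) := by
      rw [← hinner v, hBv, ContinuousLinearMap.adjoint_inner_left]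
    have h2 : (inner ℝ u (Aₓ v) : ℝ) ≤ ‖u‖ * ‖Aₓ v‖ := real_inner_le_norm u (Aₓ v)
    have h3 : ‖Aₓ v‖ ≤ ‖u‖ := by
      rcases eq_or_lt_of_le (norm_nonneg (Aₓ v)) with h | h
      · rw [← h]; exact norm_nonneg u
      · nlinarith
    have h4 := hlow v
    have : σm * ‖v‖ ≤ ‖u‖ := le_trans h4 h3
    calc ‖v‖ ≤ ‖u‖ / σm := by rw [le_div_iff₀ hσ]; linarith [this]
    -- done

/-- **Lifting-map perturbation bound in the unmixing metric.** -/
theorem lifted_unmixing_metric_bound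
    {p d N : ℕ}
    (Ω : Set (EucSp p)) (hΩconv : Convex ℝ Ω) (hΩcomp : IsCompact Ω)
    (A : EucSp p → (EucSp d →L[ℝ] EucSp N)) (hA : ContDiff ℝ 3 A)
    (σ1 σ2 : ℝ)
    (hσ1 : ∀ x ∈ Ω, ‖iteratedFDeriv ℝ 1 A x‖ ≤ σ1)
    (hσ2 : ∀ x ∈ Ω, ‖iteratedFDeriv ℝ 2 A x‖ ≤ σ2)
    -- full column rank and uniform lower singular-value bound σ̃ > 0
    (hrank : ∀ x ∈ Ω, Function.Injective (A x))
    (σmin : ℝ) (hσmin : 0 < σmin)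
    (hσminA : ∀ x ∈ Ω, ∀ v : EucSp d, σmin * ‖v‖ ≤ ‖A x v‖)
    (xs : EucSp p) (hxs : xs ∈ Ω) (ys : EucSp d) (w : EucSp N)
    (cvp : ℝ) (hcvp : cvp = (σ2 + σ1 ^ 2 / σmin) * ‖ys‖ + σ1) :
    ∀ x ∈ Ω,
      (σ2 * ‖ys‖ + σ1) * ‖x - xs‖
          + σ1 * ‖pinv A x (A xs ys + w) - pinv A xs (A xs ys + w)‖
        ≤ cvp * ‖x - xs‖ + (2 * σ1 / σmin) * ‖w‖ := by
  intro x hx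
  have hσ1nn : 0 ≤ σ1 := le_trans (norm_nonneg _) (hσ1 xs hxs)
  -- Lipschitz bound on A over Ω
  have hdiff : ∀ y ∈ Ω, DifferentiableAt ℝ A y := fun y _ =>
    (hA.differentiable (by norm_num)).differentiableAt
  have hfd : ∀ y ∈ Ω, ‖fderiv ℝ A y‖ ≤ σ1 := by
    intro y hy
    have : ‖iteratedFDeriv ℝ 0 (fderiv ℝ A) y‖ = ‖iteratedFDeriv ℝ 1 A y‖ :=
      norm_iteratedFDeriv_fderiv
    rw [norm_iteratedFDeriv_zero] at this
    rw [this]; exact hσ1 y hy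
  have hLip : ‖A x - A xs‖ ≤ σ1 * ‖x - xs‖ :=
    hΩconv.norm_image_sub_le_of_norm_fderiv_le hdiff hfd hxs hx
  -- pseudo-inverse properties at x and xs
  obtain ⟨hleftx, hbndx⟩ := pinv_core (A x) σmin hσmin (hσminA x hx)
  obtain ⟨hleftxs, hbndxs⟩ := pinv_core (A xs) σmin hσmin (hσminA xs hxs)
  have hpx : ∀ u, pinv A x u =
      ((ContinuousLinearMap.adjoint (A x) ∘L A x).inverse ∘L
        ContinuousLinearMap.adjoint (A x)) u := fun _ => rfl
  -- decompose the difference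
  have hdecomp : pinv A x (A xs ys + w) - pinv A xs (A xs ys + w)
      = pinv A x ((A xs - A x) ys) + (pinv A x w - pinv A xs w) := by
    have h1 : pinv A xs (A xs ys + w) = ys + pinv A xs w := by
      rw [show pinv A xs (A xs ys + w) = pinv A xs (A xs ys) + pinv A xs w from map_add _ _ _]
      rw [show pinv A xs (A xs ys) = ys from hleftxs ys]
    have h2 : pinv A x (A xs ys + w)
        = pinv A x ((A xs - A x) ys) + ys + pinv A x w := by
      rw [show pinv A x (A xs ys + w) = pinv A x (A xs ys) + pinv A x w from map_add _ _ _]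
      have : A xs ys = (A xs - A x) ys + A x ys := by
        simp [ContinuousLinearMap.sub_apply]
      rw [this, map_add, show pinv A x (A x ys) = ys from hleftx ys]
    rw [h1, h2]; abel
  -- bound each term
  have hb1 : ‖pinv A x ((A xs - A x) ys)‖ ≤ σ1 * ‖x - xs‖ * ‖ys‖ / σmin := by
    have h := hbndx ((A xs - A x) ys)
    have hop : ‖(A xs - A x) ys‖ ≤ σ1 * ‖x - xs‖ * ‖ys‖ := by
      calc ‖(A xs - A x) ys‖ ≤ ‖A xs - A x‖ * ‖ys‖ :=
            (A xs - A x).le_opNorm ys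
        _ = ‖A x - A xs‖ * ‖ys‖ := by rw [norm_sub_rev]
        _ ≤ σ1 * ‖x - xs‖ * ‖ys‖ :=
            mul_le_mul_of_nonneg_right hLip (norm_nonneg ys)
    calc ‖pinv A x ((A xs - A x) ys)‖ ≤ ‖(A xs - A x) ys‖ / σmin := h
      _ ≤ σ1 * ‖x - xs‖ * ‖ys‖ / σmin := by
          exact div_le_div_of_nonneg_right hop hσmin.le
  have hb2 : ‖pinv A x w‖ ≤ ‖w‖ / σmin := hbndx w
  have hb3 : ‖pinv A xs w‖ ≤ ‖w‖ / σmin := hbndxs w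
  have hΔ : ‖pinv A x (A xs ys + w) - pinv A xs (A xs ys + w)‖
      ≤ σ1 * ‖x - xs‖ * ‖ys‖ / σmin + 2 * (‖w‖ / σmin) := by
    rw [hdecomp]
    calc ‖pinv A x ((A xs - A x) ys) + (pinv A x w - pinv A xs w)‖
        ≤ ‖pinv A x ((A xs - A x) ys)‖ + ‖pinv A x w - pinv A xs w‖ := norm_add_le _ _
      _ ≤ ‖pinv A x ((A xs - A x) ys)‖ + (‖pinv A x w‖ + ‖pinv A xs w‖) := by
          linarith [norm_sub_le (pinv A x w) (pinv A xs w)]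
      _ ≤ σ1 * ‖x - xs‖ * ‖ys‖ / σmin + 2 * (‖w‖ / σmin) := by linarith
  -- conclude
  have hmul : σ1 * ‖pinv A x (A xs ys + w) - pinv A xs (A xs ys + w)‖
      ≤ σ1 * (σ1 * ‖x - xs‖ * ‖ys‖ / σmin + 2 * (‖w‖ / σmin)) :=
    mul_le_mul_of_nonneg_left hΔ hσ1nn
  have hexp : σ1 * (σ1 * ‖x - xs‖ * ‖ys‖ / σmin + 2 * (‖w‖ / σmin))
      = (σ1 ^ 2 / σmin) * ‖ys‖ * ‖x - xs‖ + (2 * σ1 / σmin) * ‖w‖ := by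
    field_simp
  rw [hcvp]
  have : (σ2 + σ1 ^ 2 / σmin) * ‖ys‖ + σ1
      = (σ2 * ‖ys‖ + σ1) + (σ1 ^ 2 / σmin) * ‖ys‖ := by ring
  rw [this]
  nlinarith [hmul, hexp]
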